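/- Let 0 < β < α, c > 0, and set D = [[−α, α], [0, −β]] and ξ = (α/(2α−β), (α−β)/(2α−β)) (the positive right eigenvector of D for its maximal eigenvalue μ = −β, normalized to sum 1). Let λ = (λ₁, λ₂) ∈ ℝ² with λ₁, λ₂ ≥ 0, let u = (u₁, u₂) : [0,∞) → ℝ² be a nonnegative solution of the cumulant system du/dt = D u − (c/2) u ⊙ u with u(0) = λ, and let v : [0,∞) → ℝ² be a differentiable solution of dv/dt = D v − c u ⊙ v with v(0) = ξ. Then lim_{t→∞} e^{β t} v(t) = (1 + (c/(2β)) λ₂)^{−2} · ξ. -/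

import Mathlib

open Filter Topology

open Set

set_option maxHeartbeats 1600000

private lemma antitone_aux {f f' : ℝ → ℝ} {T : ℝ}
    (hf : ∀ t ∈ Set.Ici T, HasDerivAt f (f' t) t)
    (h : ∀ t ∈ Set.Ici T, f' t ≤ 0) : ∀ t ∈ Set.Ici T, f t ≤ f T := by
  intro t ht
  have hA : AntitoneOn f (Set.Ici T) := by
    apply antitoneOn_of_deriv_nonpos (convex_Ici T)
    · exact fun s hs => (hf s hs).continuousAt.continuousWithinAt
    · intro s hs
      rw [interior_Ici] at hs
      exact (hf s (Set.Ioi_subset_Ici_self hs)).differentiableAt.differentiableWithinAt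
    · intro s hs
      rw [interior_Ici] at hs
      rw [(hf s (Set.Ioi_subset_Ici_self hs)).deriv]
      exact h s (Set.Ioi_subset_Ici_self hs)
  exact hA Set.self_mem_Ici ht ht

private lemma monotone_aux {f f' : ℝ → ℝ} {T : ℝ}
    (hf : ∀ t ∈ Set.Ici T, HasDerivAt f (f' t) t)
    (h : ∀ t ∈ Set.Ici T, 0 ≤ f' t) : ∀ t ∈ Set.Ici T, f T ≤ f t := by
  intro t ht
  have := antitone_aux (f := fun s => -f s) (f' := fun s => -f' s)
    (fun s hs => (hf s hs).neg) (fun s hs => neg_nonpos.mpr (h s hs)) t ht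
  linarith

private lemma const_aux {f f' : ℝ → ℝ} {T : ℝ}
    (hf : ∀ t ∈ Set.Ici T, HasDerivAt f (f' t) t)
    (h : ∀ t ∈ Set.Ici T, f' t = 0) : ∀ t ∈ Set.Ici T, f t = f T := by
  intro t ht
  have h1 := antitone_aux hf (fun s hs => le_of_eq (h s hs)) t ht
  have h2 := monotone_aux hf (fun s hs => ge_of_eq (h s hs)) t ht
  linarith

private lemma comp_le {f f' : ℝ → ℝ} {a B T : ℝ} (ha : a ≠ 0)
    (hf : ∀ t ∈ Set.Ici T, HasDerivAt f (f' t) t)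
    (hle : ∀ t ∈ Set.Ici T, f' t ≤ -a * f t + B) :
    ∀ t ∈ Set.Ici T, f t ≤ B/a + (f T - B/a) * Real.exp (-(a * (t - T))) := by
  intro t ht
  have key : ∀ s ∈ Set.Ici T, HasDerivAt (fun r => (f r - B/a) * Real.exp (a*(r-T)))
      ((f' s + a * (f s - B/a)) * Real.exp (a*(s-T))) s := by
    intro s hs
    have he : HasDerivAt (fun r => Real.exp (a*(r-T))) (a * Real.exp (a*(s-T))) s := by
      have : HasDerivAt (fun r : ℝ => a*(r-T)) a s := by
        simpa using ((hasDerivAt_id s).sub_const T).const_mul a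
      simpa [mul_comm] using this.exp
    have := ((hf s hs).sub_const (B/a)).mul he
    refine this.congr_deriv (Eq.symm ?_)
    ring
  have hd : ∀ s ∈ Set.Ici T, (f' s + a * (f s - B/a)) * Real.exp (a*(s-T)) ≤ 0 := by
    intro s hs
    apply mul_nonpos_of_nonpos_of_nonneg _ (Real.exp_pos _).le
    have := hle s hs
    have hBa : a * (B/a) = B := by field_simp
    nlinarith [this]
  have := antitone_aux key hd t ht
  simp only [sub_self, mul_zero, Real.exp_zero, mul_one] at this
  have hexp : (0:ℝ) < Real.exp (a*(t-T)) := Real.exp_pos _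
  have h3 : f t - B/a ≤ (f T - B/a) * Real.exp (-(a*(t-T))) := by
    rw [Real.exp_neg, ← div_eq_mul_inv, le_div_iff₀ hexp]
    exact this
  linarith

private lemma comp_ge {f f' : ℝ → ℝ} {a B T : ℝ} (ha : a ≠ 0)
    (hf : ∀ t ∈ Set.Ici T, HasDerivAt f (f' t) t)
    (hle : ∀ t ∈ Set.Ici T, -a * f t + B ≤ f' t) :
    ∀ t ∈ Set.Ici T, B/a + (f T - B/a) * Real.exp (-(a * (t - T))) ≤ f t := by
  intro t ht
  have := comp_le (f := fun s => -f s) (f' := fun s => -f' s) (B := -B) ha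
    (fun s hs => (hf s hs).neg)
    (fun s hs => by have := hle s hs; simp only [neg_mul, mul_neg]; linarith) t ht
  have h2 : -B/a = -(B/a) := by ring
  rw [h2] at this
  nlinarith [this]

private lemma tendsto_ode {f f' k g : ℝ → ℝ} {a Lg : ℝ} (ha : 0 < a)
    (hf : ∀ t ∈ Set.Ici (0:ℝ), HasDerivAt f (f' t) t)
    (hEq : ∀ t ∈ Set.Ici (0:ℝ), f' t = -(k t) * f t + g t)
    (hfn : ∀ t ∈ Set.Ici (0:ℝ), 0 ≤ f t)
    (hk : Tendsto k atTop (𝓝 a)) (hg : Tendsto g atTop (𝓝 Lg)) :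
    Tendsto f atTop (𝓝 (Lg / a)) := by
  rw [Metric.tendsto_nhds]
  intro ε hε
  obtain ⟨δ, hδ0, hδa, hδ1, hδ2⟩ : ∃ δ : ℝ, 0 < δ ∧ δ < a ∧
      (Lg+δ)/(a-δ) < Lg/a + ε/2 ∧ Lg/a - ε/2 < (Lg-δ)/(a+δ) := by
    have hc1 : Tendsto (fun δ : ℝ => (Lg+δ)/(a-δ)) (𝓝[>] 0) (𝓝 (Lg/a)) := by
      have hca : ContinuousAt (fun δ : ℝ => (Lg+δ)/(a-δ)) 0 := by
        apply ContinuousAt.div (by fun_prop) (by fun_prop)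
        simpa using ha.ne'
      have := hca.tendsto
      simp only [add_zero, sub_zero] at this
      exact this.mono_left nhdsWithin_le_nhds
    have hc2 : Tendsto (fun δ : ℝ => (Lg-δ)/(a+δ)) (𝓝[>] 0) (𝓝 (Lg/a)) := by
      have hca : ContinuousAt (fun δ : ℝ => (Lg-δ)/(a+δ)) 0 := by
        apply ContinuousAt.div (by fun_prop) (by fun_prop)
        simpa using ha.ne'
      have := hca.tendsto
      simp only [sub_zero, add_zero] at this
      exact this.mono_left nhdsWithin_le_nhds
    have e1 : ∀ᶠ δ in 𝓝[>] (0:ℝ), (Lg+δ)/(a-δ) < Lg/a + ε/2 :=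
      hc1.eventually_lt_const (by linarith)
    have e2 : ∀ᶠ δ in 𝓝[>] (0:ℝ), Lg/a - ε/2 < (Lg-δ)/(a+δ) :=
      hc2.eventually_const_lt (by linarith)
    have e3 : ∀ᶠ δ in 𝓝[>] (0:ℝ), δ < a :=
      eventually_nhdsWithin_of_eventually_nhds (gt_mem_nhds ha)
    have e4 : ∀ᶠ δ in 𝓝[>] (0:ℝ), 0 < δ := eventually_mem_nhdsWithin
    obtain ⟨δ, h4, h3, h1, h2⟩ := (e4.and (e3.and (e1.and e2))).exists
    exact ⟨δ, h4, h3, h1, h2⟩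
  have hke : ∀ᶠ t in atTop, |k t - a| < δ := by
    simpa [Real.dist_eq] using Metric.tendsto_nhds.mp hk δ hδ0
  have hge : ∀ᶠ t in atTop, |g t - Lg| < δ := by
    simpa [Real.dist_eq] using Metric.tendsto_nhds.mp hg δ hδ0
  obtain ⟨T0, hT0⟩ := eventually_atTop.mp ((hke.and hge).and (eventually_ge_atTop (0:ℝ)))
  set T := max T0 0 with hT
  have hTnn : (0:ℝ) ≤ T := le_max_right _ _
  have hmem : ∀ t ∈ Set.Ici T, t ∈ Set.Ici (0:ℝ) := fun t ht => le_trans hTnn ht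
  have hprops : ∀ t ∈ Set.Ici T, |k t - a| < δ ∧ |g t - Lg| < δ :=
    fun t ht => (hT0 t (le_trans (le_max_left _ _) ht)).1
  set Cu := (Lg+δ)/(a-δ) with hCu
  set Cl := (Lg-δ)/(a+δ) with hCl
  have Hu : ∀ t ∈ Set.Ici T, f t ≤ Cu + (f T - Cu) * Real.exp (-((a-δ) * (t - T))) := by
    apply comp_le (by linarith : a - δ ≠ 0) (fun t ht => hf t (hmem t ht))
    intro t ht
    rw [hEq t (hmem t ht)]
    have h1 := (abs_lt.mp (hprops t ht).1)
    have h2 := (abs_lt.mp (hprops t ht).2)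
    have h3 := hfn t (hmem t ht)
    nlinarith [h1.1, h1.2, h2.1, h2.2]
  have Hl : ∀ t ∈ Set.Ici T, Cl + (f T - Cl) * Real.exp (-((a+δ) * (t - T))) ≤ f t := by
    apply comp_ge (by linarith : a + δ ≠ 0) (fun t ht => hf t (hmem t ht))
    intro t ht
    rw [hEq t (hmem t ht)]
    have h1 := (abs_lt.mp (hprops t ht).1)
    have h2 := (abs_lt.mp (hprops t ht).2)
    have h3 := hfn t (hmem t ht)
    nlinarith [h1.1, h1.2, h2.1, h2.2]
  have hexp0 : ∀ b : ℝ, 0 < b → Tendsto (fun t : ℝ => Real.exp (-(b * (t - T)))) atTop (𝓝 0) := by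
    intro b hb
    apply Real.tendsto_exp_atBot.comp
    apply Filter.Tendsto.comp tendsto_neg_atTop_atBot
    apply Tendsto.const_mul_atTop hb
    simpa [sub_eq_add_neg] using tendsto_atTop_add_const_right atTop (-T) tendsto_id
  have ev1 : ∀ᶠ t in atTop, |f T - Cu| * Real.exp (-((a-δ) * (t - T))) < ε/2 := by
    have := (hexp0 (a-δ) (by linarith)).const_mul (|f T - Cu|)
    rw [mul_zero] at this
    exact this.eventually_lt_const (by linarith)
  have ev2 : ∀ᶠ t in atTop, |f T - Cl| * Real.exp (-((a+δ) * (t - T))) < ε/2 := by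
    have := (hexp0 (a+δ) (by linarith)).const_mul (|f T - Cl|)
    rw [mul_zero] at this
    exact this.eventually_lt_const (by linarith)
  filter_upwards [ev1, ev2, eventually_ge_atTop T] with t h1 h2 h3
  rw [Real.dist_eq, abs_lt]
  have hu := Hu t h3
  have hl := Hl t h3
  have b1 : (f T - Cu) * Real.exp (-((a-δ) * (t - T))) ≤
      |f T - Cu| * Real.exp (-((a-δ) * (t - T))) :=
    mul_le_mul_of_nonneg_right (le_abs_self _) (Real.exp_pos _).le
  have b2 : -(|f T - Cl| * Real.exp (-((a+δ) * (t - T)))) ≤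
      (f T - Cl) * Real.exp (-((a+δ) * (t - T))) := by
    rw [← neg_mul]
    exact mul_le_mul_of_nonneg_right (neg_abs_le _) (Real.exp_pos _).le
  constructor <;> nlinarith


private lemma antitone_aux' {f : ℝ → ℝ} {T : ℝ}
    (h : ∀ t ∈ Set.Ici T, ∃ y, HasDerivAt f y t ∧ y ≤ 0) :
    ∀ t ∈ Set.Ici T, f t ≤ f T := by
  intro t ht
  have hA : AntitoneOn f (Set.Ici T) := by
    apply antitoneOn_of_deriv_nonpos (convex_Ici T)
    · exact fun s hs => (h s hs).choose_spec.1.continuousAt.continuousWithinAt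
    · intro s hs
      rw [interior_Ici] at hs
      exact (h s (Set.Ioi_subset_Ici_self hs)).choose_spec.1.differentiableAt.differentiableWithinAt
    · intro s hs
      rw [interior_Ici] at hs
      rw [(h s (Set.Ioi_subset_Ici_self hs)).choose_spec.1.deriv]
      exact (h s (Set.Ioi_subset_Ici_self hs)).choose_spec.2
  exact hA Set.self_mem_Ici ht ht

private lemma monotone_aux' {f : ℝ → ℝ} {T : ℝ}
    (h : ∀ t ∈ Set.Ici T, ∃ y, HasDerivAt f y t ∧ 0 ≤ y) :
    ∀ t ∈ Set.Ici T, f T ≤ f t := by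
  intro t ht
  have := antitone_aux' (f := fun s => -f s)
    (fun s hs => ⟨-(h s hs).choose, (h s hs).choose_spec.1.neg,
      neg_nonpos.mpr (h s hs).choose_spec.2⟩) t ht
  linarith

private lemma const_aux' {f : ℝ → ℝ} {T : ℝ}
    (h : ∀ t ∈ Set.Ici T, HasDerivAt f 0 t) :
    ∀ t ∈ Set.Ici T, f t = f T := by
  intro t ht
  have h1 := antitone_aux' (fun s hs => ⟨0, h s hs, le_refl 0⟩) t ht
  have h2 := monotone_aux' (fun s hs => ⟨0, h s hs, le_refl 0⟩) t ht
  linarith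

private lemma dexp_aux (b t : ℝ) :
    HasDerivAt (fun s : ℝ => Real.exp (b*s)) (b * Real.exp (b*t)) t := by
  have h : HasDerivAt (fun s : ℝ => b*s) b t := by simpa using (hasDerivAt_id t).const_mul b
  simpa [mul_comm] using h.exp

/-- (From the proof of Proposition 4.6 of the paper, case `β < α`.)
For the two-type subcritical model with `D = [[−α, α], [0, −β]]`, `0 < β < α`, and
`ξ = (α/(2α−β), (α−β)/(2α−β))` the normalized positive right eigenvector for
`μ = −β`, if `u` is a nonnegative solution of the cumulant system with
`u(0) = λ ≥ 0` and `v` solves `dv/dt = D v − c u ⊙ v`, `v(0) = ξ`, then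
`lim_{t→∞} e^{βt} v(t) = (1 + (c/(2β)) λ₂)^{−2} ξ`. -/

theorem stmt19 (α β c : ℝ) (hβ : 0 < β) (hβα : β < α) (hc : 0 < c)
    (D : Matrix (Fin 2) (Fin 2) ℝ) (hD : D = !![-α, α; 0, -β])
    (ξ : Fin 2 → ℝ) (hξ : ξ = ![α / (2 * α - β), (α - β) / (2 * α - β)])
    (lam : Fin 2 → ℝ) (hlam : ∀ i, 0 ≤ lam i)
    (u : ℝ → Fin 2 → ℝ)
    (husol : ∀ t ∈ Set.Ici (0 : ℝ),
      HasDerivAt u (D.mulVec (u t) - (c / 2) • (u t * u t)) t)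
    (hunonneg : ∀ t ∈ Set.Ici (0 : ℝ), ∀ i : Fin 2, 0 ≤ u t i)
    (huinit : u 0 = lam)
    (v : ℝ → Fin 2 → ℝ)
    (hvsol : ∀ t ∈ Set.Ici (0 : ℝ),
      HasDerivAt v (D.mulVec (v t) - c • (u t * v t)) t)
    (hvinit : v 0 = ξ) :
    Tendsto (fun t : ℝ => Real.exp (β * t) • v t) atTop
      (𝓝 (((1 + c / (2 * β) * lam 1) ^ (-2 : ℤ)) • ξ)) := by
  have ha : (0:ℝ) < α - β := by linarith
  have ha2 : (0:ℝ) < 2*α - β := by linarith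
  set lam2 := lam 1 with hlam2def
  have hlam2nn : 0 ≤ lam2 := hlam 1
  -- component derivatives
  have du1 : ∀ t ∈ Set.Ici (0:ℝ), HasDerivAt (fun s => u s 0)
      (-α * u t 0 + α * u t 1 - c/2 * (u t 0 * u t 0)) t := by
    intro t ht
    have h := (hasDerivAt_pi.mp (husol t ht)) 0
    refine h.congr_deriv (Eq.symm ?_)
    rw [hD]
    simp [Matrix.mulVec, dotProduct, Fin.sum_univ_two]
  have du2 : ∀ t ∈ Set.Ici (0:ℝ), HasDerivAt (fun s => u s 1)
      (-β * u t 1 - c/2 * (u t 1 * u t 1)) t := by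
    intro t ht
    have h := (hasDerivAt_pi.mp (husol t ht)) 1
    refine h.congr_deriv (Eq.symm ?_)
    rw [hD]
    simp [Matrix.mulVec, dotProduct, Fin.sum_univ_two]
  have dv1 : ∀ t ∈ Set.Ici (0:ℝ), HasDerivAt (fun s => v s 0)
      (-α * v t 0 + α * v t 1 - c * (u t 0 * v t 0)) t := by
    intro t ht
    have h := (hasDerivAt_pi.mp (hvsol t ht)) 0
    refine h.congr_deriv (Eq.symm ?_)
    rw [hD]
    simp [Matrix.mulVec, dotProduct, Fin.sum_univ_two]
  have dv2 : ∀ t ∈ Set.Ici (0:ℝ), HasDerivAt (fun s => v s 1)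
      (-β * v t 1 - c * (u t 1 * v t 1)) t := by
    intro t ht
    have h := (hasDerivAt_pi.mp (hvsol t ht)) 1
    refine h.congr_deriv (Eq.symm ?_)
    rw [hD]
    simp [Matrix.mulVec, dotProduct, Fin.sum_univ_two]
  -- the h function
  set hfun : ℝ → ℝ := fun t => 1 + c/(2*β) * lam2 * (1 - Real.exp (-(β*t))) with hhfun
  have hfun0 : hfun 0 = 1 := by simp [hhfun]
  have hcoef : 0 ≤ c/(2*β) * lam2 := by positivity
  have hfun_ge : ∀ t ∈ Set.Ici (0:ℝ), 1 ≤ hfun t := by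
    intro t ht
    have h1 : Real.exp (-(β*t)) ≤ 1 := by
      rw [show (1:ℝ) = Real.exp 0 by simp]
      apply Real.exp_le_exp.mpr
      have : 0 ≤ β * t := mul_nonneg hβ.le ht
      linarith
    have h2 : 0 ≤ c/(2*β) * lam2 * (1 - Real.exp (-(β*t))) :=
      mul_nonneg hcoef (by linarith)
    simp only [hhfun]
    linarith
  have hfunpos : ∀ t ∈ Set.Ici (0:ℝ), 0 < hfun t := fun t ht => lt_of_lt_of_le one_pos (hfun_ge t ht)
  have hfun_deriv : ∀ t : ℝ, HasDerivAt hfun (c/2 * lam2 * Real.exp (-(β*t))) t := by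
    intro t
    have h1 : HasDerivAt (fun s : ℝ => Real.exp (-(β*s))) (-β * Real.exp (-(β*t))) t := by
      have h : HasDerivAt (fun s : ℝ => Real.exp ((-β)*s)) ((-β) * Real.exp ((-β)*t)) t := by
        have hh : HasDerivAt (fun s : ℝ => (-β)*s) (-β) t := by
          simpa using (hasDerivAt_id t).const_mul (-β)
        simpa [mul_comm] using hh.exp
      simpa [neg_mul] using h
    have h2 := ((h1.const_sub 1).const_mul (c/(2*β)*lam2)).const_add 1
    rw [hhfun]
    refine h2.congr_deriv (Eq.symm ?_)
    field_simp
  -- u2 ≤ lam2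
  have hu2le : ∀ t ∈ Set.Ici (0:ℝ), u t 1 ≤ lam2 := by
    have key : ∀ t ∈ Set.Ici (0:ℝ), ∃ y, HasDerivAt (fun s => u s 1) y t ∧ y ≤ 0 := by
      intro s hs
      exact ⟨_, du2 s hs, by nlinarith [hunonneg s hs 1]⟩
    intro t ht
    have h := antitone_aux' key t ht
    simpa [huinit] using h
  -- exact formula for u2
  have hu2eq : ∀ t ∈ Set.Ici (0:ℝ), u t 1 = lam2 * Real.exp (-(β*t)) / hfun t := by
    rcases eq_or_lt_of_le hlam2nn with h0 | hpos
    · intro t ht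
      have h1 := hu2le t ht
      have h2 := hunonneg t ht 1
      rw [← h0] at h1 ⊢
      simp
      linarith
    · -- positivity of u2
      have hu2pos : ∀ t ∈ Set.Ici (0:ℝ), 0 < u t 1 := by
        set K := β + c/2 * lam2 with hK
        have key : ∀ t ∈ Set.Ici (0:ℝ), ∃ y,
            HasDerivAt (fun s => u s 1 * Real.exp (K*s)) y t ∧ 0 ≤ y := by
          intro s hs
          refine ⟨_, (du2 s hs).mul (dexp_aux K s), ?_⟩
          have h1 := hunonneg s hs 1
          have h2 := hu2le s hs
          have h3 := (Real.exp_pos (K*s)).le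
          simp only [hK]
          nlinarith [mul_nonneg hc.le (mul_nonneg (mul_nonneg h1 h3) (sub_nonneg.mpr h2))]
        intro t ht
        have h := monotone_aux' key t ht
        simp only [huinit] at h
        rw [mul_zero, Real.exp_zero, mul_one] at h
        by_contra hneg
        push_neg at hneg
        have hle : u t 1 * Real.exp (K*t) ≤ 0 :=
          mul_nonpos_of_nonpos_of_nonneg hneg (Real.exp_pos _).le
        rw [hlam2def] at hpos
        linarith
      intro t ht
      have hne : u t 1 ≠ 0 := (hu2pos t ht).ne'
      -- G is constant
      have hGd : ∀ s ∈ Set.Ici (0:ℝ), HasDerivAt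
          (fun r => (u r 1)⁻¹ * Real.exp (-(β*r)) - c/(2*β) * (1 - Real.exp (-(β*r)))) 0 s := by
        intro s hs
        have hnes : u s 1 ≠ 0 := (hu2pos s hs).ne'
        have hinv : HasDerivAt (fun r => (u r 1)⁻¹)
            (-(-β * u s 1 - c/2 * (u s 1 * u s 1)) / (u s 1)^2) s := (du2 s hs).inv hnes
        have hexp : HasDerivAt (fun r : ℝ => Real.exp (-(β*r))) (-β * Real.exp (-(β*s))) s := by
          have h := dexp_aux (-β) s
          simpa [neg_mul] using h
        have hmain := (hinv.mul hexp).sub ((hexp.const_sub 1).const_mul (c/(2*β)))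
        refine hmain.congr_deriv (Eq.symm ?_)
        field_simp
        ring
      have hG := const_aux' hGd t ht
      have hG0 : (u 0 1)⁻¹ * Real.exp (-(β*0)) - c/(2*β) * (1 - Real.exp (-(β*0))) = lam2⁻¹ := by
        simp [huinit, hlam2def]
      rw [hG0] at hG
      -- solve for u t 1
      have hfne : hfun t ≠ 0 := (hfunpos t ht).ne'
      rw [eq_div_iff hfne]
      have hlam2ne : lam2 ≠ 0 := hpos.ne'
      have hfid : hfun t = lam2 * (lam2⁻¹ + c/(2*β)*(1 - Real.exp (-(β*t)))) := by
        simp only [hhfun]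
        field_simp
      have h3 : hfun t = lam2 * ((u t 1)⁻¹ * Real.exp (-(β*t))) := by
        rw [hfid]
        congr 1
        linarith [hG]
      rw [h3]
      field_simp
  -- exact formula for v2
  have hv2eq : ∀ t ∈ Set.Ici (0:ℝ), v t 1 = ξ 1 * Real.exp (-(β*t)) / (hfun t)^2 := by
    have hd : ∀ s ∈ Set.Ici (0:ℝ), HasDerivAt
        (fun r => v r 1 * (Real.exp (β*r) * (hfun r)^2)) 0 s := by
      intro s hs
      have h1 : HasDerivAt (fun r => Real.exp (β*r) * (hfun r)^2)
          ((β * Real.exp (β*s)) * (hfun s)^2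
            + Real.exp (β*s) * (2 * hfun s ^ 1 * (c/2 * lam2 * Real.exp (-(β*s))))) s :=
        (dexp_aux β s).mul ((hfun_deriv s).pow 2)
      have hmain := (dv2 s hs).mul h1
      refine hmain.congr_deriv (Eq.symm ?_)
      rw [hu2eq s hs]
      have hfne : hfun s ≠ 0 := (hfunpos s hs).ne'
      field_simp
      ring
    intro t ht
    have hct := const_aux' hd t ht
    have h0 : v 0 1 * (Real.exp (β*0) * (hfun 0)^2) = ξ 1 := by
      simp [hvinit, hfun0]
    rw [h0] at hct
    have hfne : hfun t ≠ 0 := (hfunpos t ht).ne'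
    have hv : v t 1 = ξ 1 / (Real.exp (β*t) * (hfun t)^2) := by
      rw [eq_div_iff (by positivity)]
      exact hct
    rw [hv, Real.exp_neg]
    field_simp
  -- v2 nonneg and w2 identity
  have hξ0 : ξ 0 = α/(2*α-β) := by rw [hξ]; rfl
  have hξ1 : ξ 1 = (α-β)/(2*α-β) := by rw [hξ]; rfl
  have hξ0pos : 0 < ξ 0 := by rw [hξ0]; exact div_pos (by linarith) ha2
  have hξ1pos : 0 < ξ 1 := by rw [hξ1]; exact div_pos ha ha2
  have hv2nn : ∀ t ∈ Set.Ici (0:ℝ), 0 ≤ v t 1 := by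
    intro t ht
    rw [hv2eq t ht]
    have := hfunpos t ht
    positivity
  have hw2eq : ∀ t ∈ Set.Ici (0:ℝ), Real.exp (β*t) * v t 1 = ξ 1 / (hfun t)^2 := by
    intro t ht
    rw [hv2eq t ht, Real.exp_neg]
    have hfne : hfun t ≠ 0 := (hfunpos t ht).ne'
    field_simp
  -- u2 * exp(βt) ≤ lam2
  have hu2exp : ∀ t ∈ Set.Ici (0:ℝ), u t 1 * Real.exp (β*t) ≤ lam2 := by
    intro t ht
    rw [hu2eq t ht]
    have hh1 := hfun_ge t ht
    have hEe : Real.exp (-(β*t)) * Real.exp (β*t) = 1 := by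
      rw [← Real.exp_add]; simp
    rw [div_mul_eq_mul_div, mul_assoc, hEe, mul_one]
    exact div_le_self hlam2nn hh1
  -- bound on u1
  set M : ℝ := max (lam 0) (α * lam2/(α-β)) with hM
  have hMa : α * lam2 ≤ (α-β) * M := by
    have h1 : α * lam2/(α-β) ≤ M := le_max_right _ _
    rw [div_le_iff₀ ha] at h1
    linarith
  have hu1exp : ∀ t ∈ Set.Ici (0:ℝ), u t 0 * Real.exp (β*t) ≤ M := by
    have key : ∀ s ∈ Set.Ici (0:ℝ), ∃ y, HasDerivAt
        (fun r => (u r 0 * Real.exp (β*r) - M) * Real.exp ((α-β)*r)) y s ∧ y ≤ 0 := by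
      intro s hs
      refine ⟨(α * (u s 1 * Real.exp (β*s)) - c/2 * (u s 0 * u s 0) * Real.exp (β*s)
          - (α-β) * M) * Real.exp ((α-β)*s), ?_, ?_⟩
      · have hmain := (((du1 s hs).mul (dexp_aux β s)).sub_const M).mul (dexp_aux (α-β) s)
        refine hmain.congr_deriv (Eq.symm ?_)
        simp only [Pi.mul_apply]
        ring
      · apply mul_nonpos_of_nonpos_of_nonneg _ (Real.exp_pos _).le
        have h1 := hu2exp s hs
        have h2 := hunonneg s hs 0
        have h3 := (Real.exp_pos (β*s)).le
        have h4 : α * (u s 1 * Real.exp (β*s)) ≤ α * lam2 :=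
          mul_le_mul_of_nonneg_left h1 (by linarith)
        have h5 : 0 ≤ c/2 * (u s 0 * u s 0) * Real.exp (β*s) :=
          mul_nonneg (mul_nonneg (by positivity) (mul_nonneg h2 h2)) h3
        linarith [hMa]
    intro t ht
    have h := antitone_aux' key t ht
    have h0 : (u 0 0 * Real.exp (β*0) - M) * Real.exp ((α-β)*0) = lam 0 - M := by
      simp [huinit]
    rw [h0] at h
    have hlM : lam 0 - M ≤ 0 := by
      have := le_max_left (lam 0) (α * lam2/(α-β))
      simp only [hM]
      linarith [this]
    nlinarith [Real.exp_pos ((α-β)*t)]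
  -- c * u1 tends to 0
  have hexp_tends : Tendsto (fun t : ℝ => Real.exp (-(β*t))) atTop (𝓝 0) := by
    apply Real.tendsto_exp_atBot.comp
    exact Filter.Tendsto.comp tendsto_neg_atTop_atBot (Tendsto.const_mul_atTop hβ tendsto_id)
  have hcu1 : Tendsto (fun t => c * u t 0) atTop (𝓝 0) := by
    apply squeeze_zero' (g := fun t => c * M * Real.exp (-(β*t)))
    · filter_upwards [eventually_ge_atTop (0:ℝ)] with t ht
      exact mul_nonneg hc.le (hunonneg t ht 0)
    · filter_upwards [eventually_ge_atTop (0:ℝ)] with t ht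
      have h1 := hu1exp t ht
      have h4 : Real.exp (β*t) * Real.exp (-(β*t)) = 1 := by
        rw [← Real.exp_add]; simp
      have h3 := mul_le_mul_of_nonneg_right h1 (Real.exp_pos (-(β*t))).le
      have h2 : u t 0 ≤ M * Real.exp (-(β*t)) := by
        calc u t 0 = u t 0 * (Real.exp (β*t) * Real.exp (-(β*t))) := by rw [h4, mul_one]
        _ = u t 0 * Real.exp (β*t) * Real.exp (-(β*t)) := by ring
        _ ≤ M * Real.exp (-(β*t)) := h3
      calc c * u t 0 ≤ c * (M * Real.exp (-(β*t))) := mul_le_mul_of_nonneg_left h2 hc.le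
      _ = c * M * Real.exp (-(β*t)) := by ring
    · have := hexp_tends.const_mul (c*M)
      simpa using this
  -- positivity of v1
  have hu1cont : Continuous (fun s : ℝ => u (max s 0) 0) := by
    apply ContinuousOn.comp_continuous (s := Set.Ici (0:ℝ))
      (fun t ht => ((du1 t ht).continuousAt).continuousWithinAt)
      (continuous_id.max continuous_const) (fun x => Set.mem_Ici.mpr (le_max_right _ _))
  set U : ℝ → ℝ := fun t => ∫ s in (0:ℝ)..t, u (max s 0) 0 with hUdef
  have hUd : ∀ t : ℝ, HasDerivAt U (u (max t 0) 0) t := fun t =>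
    intervalIntegral.integral_hasDerivAt_right (hu1cont.intervalIntegrable _ _)
      hu1cont.stronglyMeasurable.stronglyMeasurableAtFilter hu1cont.continuousAt
  have hv1pos : ∀ t ∈ Set.Ici (0:ℝ), 0 < v t 0 := by
    have key : ∀ s ∈ Set.Ici (0:ℝ), ∃ y, HasDerivAt
        (fun r => v r 0 * Real.exp (α*r + c*U r)) y s ∧ 0 ≤ y := by
      intro s hs
      have hmax : max s 0 = s := max_eq_left hs
      have hE : HasDerivAt (fun r : ℝ => Real.exp (α*r + c*U r))
          ((α + c * u s 0) * Real.exp (α*s + c*U s)) s := by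
        have h1 : HasDerivAt (fun r : ℝ => α*r + c*U r) (α + c * u s 0) s := by
          have h2 : HasDerivAt (fun r : ℝ => α*r) α s := by
            simpa using (hasDerivAt_id s).const_mul α
          have h3 := (hUd s).const_mul c
          rw [hmax] at h3
          exact h2.add h3
        simpa [mul_comm] using h1.exp
      refine ⟨_, (dv1 s hs).mul hE, ?_⟩
      have h1 := hv2nn s hs
      have h2 := (Real.exp_pos (α*s + c*U s)).le
      nlinarith [mul_nonneg h1 h2, mul_nonneg (mul_nonneg (by linarith : (0:ℝ) ≤ α) h1) h2]
    intro t ht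
    have h := monotone_aux' key t ht
    have h0 : v 0 0 * Real.exp (α*0 + c*U 0) = ξ 0 := by
      simp [hvinit, hUdef, intervalIntegral.integral_same]
    rw [h0] at h
    nlinarith [Real.exp_pos (α*t + c*U t), hξ0pos]
  -- limit of hfun
  set hinf : ℝ := 1 + c/(2*β) * lam2 with hhinf
  have hinfpos : 0 < hinf := by simp only [hhinf]; linarith [hcoef]
  have hfun_tends : Tendsto hfun atTop (𝓝 hinf) := by
    have h1 := (((tendsto_const_nhds : Tendsto (fun _ : ℝ => (1:ℝ)) atTop (𝓝 1))).sub
      hexp_tends).const_mul (c/(2*β) * lam2)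
    have h2 := ((tendsto_const_nhds : Tendsto (fun _ : ℝ => (1:ℝ)) atTop (𝓝 1))).add h1
    simp only [sub_zero, mul_one] at h2
    exact h2
  -- limit of w2
  have hw2_tends : Tendsto (fun t => Real.exp (β*t) * v t 1) atTop (𝓝 (ξ 1 / hinf^2)) := by
    have h1 : Tendsto (fun t => ξ 1 / (hfun t)^2) atTop (𝓝 (ξ 1 / hinf^2)) :=
      tendsto_const_nhds.div (hfun_tends.pow 2) (pow_ne_zero 2 hinfpos.ne')
    apply h1.congr'
    filter_upwards [eventually_ge_atTop (0:ℝ)] with t ht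
    exact (hw2eq t ht).symm
  -- main limit for w1 via tendsto_ode
  have hmain : Tendsto (fun t => Real.exp (β*t) * v t 0) atTop
      (𝓝 ((α * (ξ 1 / hinf^2)) / (α - β))) := by
    apply tendsto_ode (k := fun t => (α-β) + c * u t 0)
      (g := fun t => α * (Real.exp (β*t) * v t 1))
      (f' := fun t => -((α-β) + c * u t 0) * (Real.exp (β*t) * v t 0)
        + α * (Real.exp (β*t) * v t 1)) ha
    · intro t ht
      have hmain := (dexp_aux β t).mul (dv1 t ht)
      refine hmain.congr_deriv (Eq.symm ?_)
      ring
    · intro t ht; rfl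
    · intro t ht
      exact mul_nonneg (Real.exp_pos _).le (hv1pos t ht).le
    · have := ((tendsto_const_nhds : Tendsto (fun _ : ℝ => α - β) atTop (𝓝 (α - β)))).add hcu1
      simpa using this
    · exact hw2_tends.const_mul α
  -- assemble
  rw [tendsto_pi_nhds]
  intro i
  have hzpow : (1 + c / (2 * β) * lam 1) ^ (-2 : ℤ) = (hinf^2)⁻¹ := by
    rw [← hlam2def, ← hhinf, zpow_neg, zpow_two, sq, mul_inv]
  fin_cases i
  · have hval : (α * (ξ 1 / hinf^2)) / (α - β) = (hinf^2)⁻¹ * ξ 0 := by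
      rw [hξ0, hξ1]
      field_simp
    have h := hmain
    rw [hval] at h
    convert h using 2 with t <;> simp [Pi.smul_apply, smul_eq_mul, hzpow]
  · have hval : ξ 1 / hinf^2 = (hinf^2)⁻¹ * ξ 1 := by ring
    have h := hw2_tends
    rw [hval] at h
    convert h using 2 with t <;> simp [Pi.smul_apply, smul_eq_mul, hzpow]
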